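/- arXiv:2412.03478 — 2 statements merged into one kernel-verified Lean document; each statement's English description precedes it below -/
import Mathlib

section
/- If K is a bounded, continuous, integrally strictly positive definite kernel on ℝ^d, then the maximum mean discrepancy γ_K(μ₀, μ₁) := sup_{f ∈ H, ‖f‖ ≤ 1} |∫ f dμ₀ − ∫ f dμ₁| defines a metric on the set of Borel probability measures on ℝ^d. -/
open MeasureTheory Filter Topology
open scoped RealInnerProductSpace ENNReal

/-- If `K` is a bounded, continuous, integrally strictly positive definite kernel on `ℝ^d`
(presented via its RKHS `H` with feature map `Φ`, so that elements `f` of `H` act on points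
by `f(x) = ⟪f, Φ x⟫` and `K x y = ⟪Φ x, Φ y⟫`, with the features spanning a dense subspace),
then the maximum mean discrepancy
`γ_K(μ₀, μ₁) = sup_{f ∈ H, ‖f‖ ≤ 1} |∫ f dμ₀ − ∫ f dμ₁|`
defines a metric on the set of Borel probability measures on `ℝ^d`. -/
theorem stmt0 {d : ℕ} {H : Type*} [NormedAddCommGroup H] [InnerProductSpace ℝ H]
    (K : EuclideanSpace ℝ (Fin d) → EuclideanSpace ℝ (Fin d) → ℝ)
    (Φ : EuclideanSpace ℝ (Fin d) → H)
    (hKΦ : ∀ x y, K x y = ⟪Φ x, Φ y⟫)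
    (hdense : (Submodule.span ℝ (Set.range Φ)).topologicalClosure = ⊤)
    (hsymm : ∀ x y, K x y = K y x)
    (hbdd : ∃ C, ∀ x y, |K x y| ≤ C)
    (hcont : Continuous fun p : EuclideanSpace ℝ (Fin d) × EuclideanSpace ℝ (Fin d) => K p.1 p.2)
    -- integral strict positive definiteness: for every nonzero finite signed Borel measure
    -- `η = p - n` (Jordan decomposition into finite measures `p ≠ n`), `∬ K dη dη > 0`
    (hispd : ∀ p n : Measure (EuclideanSpace ℝ (Fin d)), IsFiniteMeasure p → IsFiniteMeasure n →
      p ≠ n →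
      0 < ∫ x, ∫ y, K x y ∂p ∂p - 2 * ∫ x, ∫ y, K x y ∂n ∂p + ∫ x, ∫ y, K x y ∂n ∂n)
    (γ : Measure (EuclideanSpace ℝ (Fin d)) → Measure (EuclideanSpace ℝ (Fin d)) → ℝ)
    (hγ : ∀ μ₀ μ₁ : Measure (EuclideanSpace ℝ (Fin d)), γ μ₀ μ₁ =
      sSup {r : ℝ | ∃ f : H, ‖f‖ ≤ 1 ∧
        r = |(∫ x, ⟪f, Φ x⟫ ∂μ₀) - ∫ x, ⟪f, Φ x⟫ ∂μ₁|}) :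
    (∀ μ₀ μ₁ : Measure (EuclideanSpace ℝ (Fin d)), IsProbabilityMeasure μ₀ →
        IsProbabilityMeasure μ₁ → 0 ≤ γ μ₀ μ₁) ∧
    (∀ μ₀ μ₁ : Measure (EuclideanSpace ℝ (Fin d)), IsProbabilityMeasure μ₀ →
        IsProbabilityMeasure μ₁ → γ μ₀ μ₁ = γ μ₁ μ₀) ∧
    (∀ μ₀ μ₁ : Measure (EuclideanSpace ℝ (Fin d)), IsProbabilityMeasure μ₀ →
        IsProbabilityMeasure μ₁ → (γ μ₀ μ₁ = 0 ↔ μ₀ = μ₁)) ∧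
    (∀ μ₀ μ₁ μ₂ : Measure (EuclideanSpace ℝ (Fin d)), IsProbabilityMeasure μ₀ →
        IsProbabilityMeasure μ₁ → IsProbabilityMeasure μ₂ →
        γ μ₀ μ₂ ≤ γ μ₀ μ₁ + γ μ₁ μ₂) := by
  obtain ⟨C, hC⟩ := hbdd
  set B := Real.sqrt C with hBdef
  have hB0 : 0 ≤ B := Real.sqrt_nonneg C
  have hΦsq : ∀ x, ‖Φ x‖ ^ 2 = K x x := fun x => by
    rw [hKΦ, real_inner_self_eq_norm_sq]
  have hΦnorm : ∀ x, ‖Φ x‖ ≤ B := by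
    intro x
    rw [show ‖Φ x‖ = Real.sqrt (K x x) by rw [← hΦsq, Real.sqrt_sq (norm_nonneg _)]]
    exact Real.sqrt_le_sqrt (le_trans (le_abs_self _) (hC x x))
  -- boundedness of the evaluation integrals
  have hIbound : ∀ (f : H) (μ : Measure (EuclideanSpace ℝ (Fin d))),
      IsProbabilityMeasure μ → ‖f‖ ≤ 1 → |∫ x, ⟪f, Φ x⟫ ∂μ| ≤ B := by
    intro f μ hμ hf
    haveI := hμ
    have h := norm_integral_le_of_norm_le_const (μ := μ) (C := B)
      (Eventually.of_forall fun x => by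
        calc ‖⟪f, Φ x⟫‖ ≤ ‖f‖ * ‖Φ x‖ := norm_inner_le_norm f (Φ x)
        _ ≤ 1 * B := mul_le_mul hf (hΦnorm x) (norm_nonneg _) zero_le_one
        _ = B := one_mul B)
    simpa [Real.norm_eq_abs, measure_univ] using h
  -- the set defining γ
  have hmem0 : ∀ μ₀ μ₁ : Measure (EuclideanSpace ℝ (Fin d)),
      (0 : ℝ) ∈ {r : ℝ | ∃ f : H, ‖f‖ ≤ 1 ∧
        r = |(∫ x, ⟪f, Φ x⟫ ∂μ₀) - ∫ x, ⟪f, Φ x⟫ ∂μ₁|} :=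
    fun μ₀ μ₁ => ⟨0, by simp, by simp⟩
  have bddS : ∀ μ₀ μ₁ : Measure (EuclideanSpace ℝ (Fin d)), IsProbabilityMeasure μ₀ →
      IsProbabilityMeasure μ₁ → BddAbove {r : ℝ | ∃ f : H, ‖f‖ ≤ 1 ∧
        r = |(∫ x, ⟪f, Φ x⟫ ∂μ₀) - ∫ x, ⟪f, Φ x⟫ ∂μ₁|} := by
    intro μ₀ μ₁ h₀ h₁
    refine ⟨2 * B, ?_⟩
    rintro r ⟨f, hf, rfl⟩
    calc |(∫ x, ⟪f, Φ x⟫ ∂μ₀) - ∫ x, ⟪f, Φ x⟫ ∂μ₁|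
        ≤ |∫ x, ⟪f, Φ x⟫ ∂μ₀| + |∫ x, ⟪f, Φ x⟫ ∂μ₁| := abs_sub _ _
      _ ≤ B + B := add_le_add (hIbound f μ₀ h₀ hf) (hIbound f μ₁ h₁ hf)
      _ = 2 * B := by ring
  have hnn : ∀ μ₀ μ₁ : Measure (EuclideanSpace ℝ (Fin d)), IsProbabilityMeasure μ₀ →
      IsProbabilityMeasure μ₁ → 0 ≤ γ μ₀ μ₁ := by
    intro μ₀ μ₁ h₀ h₁
    rw [hγ]
    exact le_csSup (bddS μ₀ μ₁ h₀ h₁) (hmem0 μ₀ μ₁)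
  -- continuity of Φ
  have hΦcont : Continuous Φ := by
    rw [continuous_iff_continuousAt]
    intro x
    rw [ContinuousAt, tendsto_iff_dist_tendsto_zero]
    have heq : (fun y => dist (Φ y) (Φ x)) =
        fun y => Real.sqrt (K y y - 2 * K y x + K x x) := by
      funext y
      rw [dist_eq_norm, ← Real.sqrt_sq (norm_nonneg (Φ y - Φ x))]
      congr 1
      rw [norm_sub_sq_real, hΦsq y, hΦsq x, ← hKΦ y x]
    rw [heq]
    have h0 : Real.sqrt (K x x - 2 * K x x + K x x) = 0 := by
      rw [show K x x - 2 * K x x + K x x = 0 by ring, Real.sqrt_zero]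
    rw [← h0]
    have h1 : Continuous fun y => K y y := hcont.comp (continuous_id.prodMk continuous_id)
    have h2 : Continuous fun y => K y x := hcont.comp (continuous_id.prodMk continuous_const)
    exact (Real.continuous_sqrt.comp
      ((h1.sub (continuous_const.mul h2)).add continuous_const)).tendsto x
  have hevc : ∀ f : H, Continuous fun x : EuclideanSpace ℝ (Fin d) => ⟪f, Φ x⟫ :=
    fun f => continuous_const.inner hΦcont
  -- integrability of K on products
  have hKint : ∀ (μ ν : Measure (EuclideanSpace ℝ (Fin d))), IsProbabilityMeasure μ →
      IsProbabilityMeasure ν →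
      Integrable (fun p : EuclideanSpace ℝ (Fin d) × EuclideanSpace ℝ (Fin d) => K p.1 p.2)
        (μ.prod ν) := by
    intro μ ν hμ hν
    haveI := hμ; haveI := hν
    refine (integrable_const C).mono' hcont.aestronglyMeasurable
      (Eventually.of_forall fun p => ?_)
    simpa [Real.norm_eq_abs] using hC p.1 p.2
  refine ⟨hnn, ?_, ?_, ?_⟩
  · -- symmetry
    intro μ₀ μ₁ h₀ h₁
    rw [hγ, hγ]
    congr 1
    ext r
    constructor
    · rintro ⟨f, hf, rfl⟩
      exact ⟨f, hf, abs_sub_comm _ _⟩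
    · rintro ⟨f, hf, rfl⟩
      exact ⟨f, hf, abs_sub_comm _ _⟩
  · -- identity of indiscernibles
    intro μ₀ μ₁ h₀ h₁
    constructor
    · intro hz
      rw [hγ] at hz
      have hL : ∀ f : H, ‖f‖ ≤ 1 → ∫ x, ⟪f, Φ x⟫ ∂μ₀ = ∫ x, ⟪f, Φ x⟫ ∂μ₁ := by
        intro f hf
        have hmem : |(∫ x, ⟪f, Φ x⟫ ∂μ₀) - ∫ x, ⟪f, Φ x⟫ ∂μ₁| ∈
            {r : ℝ | ∃ f : H, ‖f‖ ≤ 1 ∧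
              r = |(∫ x, ⟪f, Φ x⟫ ∂μ₀) - ∫ x, ⟪f, Φ x⟫ ∂μ₁|} := ⟨f, hf, rfl⟩
        have hle := le_csSup (bddS μ₀ μ₁ h₀ h₁) hmem
        rw [hz] at hle
        have : |(∫ x, ⟪f, Φ x⟫ ∂μ₀) - ∫ x, ⟪f, Φ x⟫ ∂μ₁| = 0 :=
          le_antisymm hle (abs_nonneg _)
        exact sub_eq_zero.mp (abs_eq_zero.mp this)
      have hLg : ∀ g : H, ∫ x, ⟪g, Φ x⟫ ∂μ₀ = ∫ x, ⟪g, Φ x⟫ ∂μ₁ := by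
        intro g
        rcases eq_or_ne g 0 with rfl | hg
        · simp
        · have hn : (0 : ℝ) < ‖g‖ := norm_pos_iff.mpr hg
          have h1 := hL (‖g‖⁻¹ • g) (by
            rw [norm_smul, Real.norm_eq_abs, abs_of_nonneg (inv_nonneg.mpr hn.le),
              inv_mul_cancel₀ hn.ne'])
          simp only [real_inner_smul_left, integral_const_mul] at h1
          exact mul_left_cancel₀ (inv_ne_zero hn.ne') h1
      have hgg : ∀ z, (∫ y, K z y ∂μ₀) = ∫ y, K z y ∂μ₁ := by
        intro z
        have h := hLg (Φ z)
        simpa only [← hKΦ] using h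
      by_contra hne
      have hE := hispd μ₀ μ₁ inferInstance inferInstance hne
      have e1 : (∫ x, ∫ y, K x y ∂μ₀ ∂μ₀) = ∫ x, ∫ y, K x y ∂μ₁ ∂μ₀ :=
        integral_congr_ae (Eventually.of_forall fun x => hgg x)
      have hswap : (∫ x, ∫ y, K x y ∂μ₁ ∂μ₀) = ∫ x, ∫ y, K x y ∂μ₁ ∂μ₁ := by
        rw [integral_integral_swap (hKint μ₀ μ₁ h₀ h₁)]
        refine integral_congr_ae (Eventually.of_forall fun y => ?_)
        calc (∫ x, K x y ∂μ₀) = ∫ x, K y x ∂μ₀ :=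
              integral_congr_ae (Eventually.of_forall fun x => hsymm x y)
          _ = ∫ x, K y x ∂μ₁ := hgg y
      rw [e1, hswap] at hE
      linarith
    · intro h
      subst h
      rw [hγ]
      have hset : {r : ℝ | ∃ f : H, ‖f‖ ≤ 1 ∧
          r = |(∫ x, ⟪f, Φ x⟫ ∂μ₀) - ∫ x, ⟪f, Φ x⟫ ∂μ₀|} = {0} := by
        ext r
        simp only [Set.mem_setOf_eq, Set.mem_singleton_iff]
        constructor
        · rintro ⟨f, hf, rfl⟩; simp
        · rintro rfl; exact ⟨0, by simp, by simp⟩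
      rw [hset, csSup_singleton]
  · -- triangle inequality
    intro μ₀ μ₁ μ₂ h₀ h₁ h₂
    rw [hγ μ₀ μ₂]
    apply Real.sSup_le
    · rintro r ⟨f, hf, rfl⟩
      have t01 : |(∫ x, ⟪f, Φ x⟫ ∂μ₀) - ∫ x, ⟪f, Φ x⟫ ∂μ₁| ≤ γ μ₀ μ₁ := by
        rw [hγ]; exact le_csSup (bddS μ₀ μ₁ h₀ h₁) ⟨f, hf, rfl⟩
      have t12 : |(∫ x, ⟪f, Φ x⟫ ∂μ₁) - ∫ x, ⟪f, Φ x⟫ ∂μ₂| ≤ γ μ₁ μ₂ := by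
        rw [hγ]; exact le_csSup (bddS μ₁ μ₂ h₁ h₂) ⟨f, hf, rfl⟩
      calc |(∫ x, ⟪f, Φ x⟫ ∂μ₀) - ∫ x, ⟪f, Φ x⟫ ∂μ₂|
          = |((∫ x, ⟪f, Φ x⟫ ∂μ₀) - ∫ x, ⟪f, Φ x⟫ ∂μ₁) +
            ((∫ x, ⟪f, Φ x⟫ ∂μ₁) - ∫ x, ⟪f, Φ x⟫ ∂μ₂)| := by ring_nf
        _ ≤ _ := abs_add_le _ _
        _ ≤ γ μ₀ μ₁ + γ μ₁ μ₂ := add_le_add t01 t12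
    · exact add_nonneg (hnn μ₀ μ₁ h₀ h₁) (hnn μ₁ μ₂ h₁ h₂)
end

section
/- Let εₙ → 0 and λₙ → ∞ be positive sequences, and let Tₙ satisfy M_{λₙ}(Tₙ) − εₙ ≤ inf_T M_{λₙ}(T), where M_λ(T) = M(T) + λ γ²(μ∘T⁻¹, ν). Suppose there exists T* with μ∘(T*)⁻¹ = ν and M(T*) < ∞. Then λₙ γ²(μ∘Tₙ⁻¹, ν) → 0 as n → ∞; in particular √λₙ γ(μ∘Tₙ⁻¹, ν) → 0. -/
open MeasureTheory Filter Topology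
open scoped ENNReal

/-- `γ` is a metric on the set of Borel probability measures on `ℝ^d`. -/
def IsProbMetric {d : ℕ}
    (γ : Measure (EuclideanSpace ℝ (Fin d)) → Measure (EuclideanSpace ℝ (Fin d)) → ℝ) : Prop :=
  (∀ μ ν, IsProbabilityMeasure μ → IsProbabilityMeasure ν → 0 ≤ γ μ ν) ∧
  (∀ μ ν, IsProbabilityMeasure μ → IsProbabilityMeasure ν → γ μ ν = γ ν μ) ∧
  (∀ μ ν, IsProbabilityMeasure μ → IsProbabilityMeasure ν → (γ μ ν = 0 ↔ μ = ν)) ∧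
  (∀ μ ν ρ, IsProbabilityMeasure μ → IsProbabilityMeasure ν → IsProbabilityMeasure ρ →
    γ μ ρ ≤ γ μ ν + γ ν ρ)

/-- Let `εₙ → 0` and `λₙ → ∞` be positive sequences, and let `Tₙ` satisfy
`M_{λₙ}(Tₙ) − εₙ ≤ inf_T M_{λₙ}(T)` where `M_λ(T) = M(T) + λ γ²(μ∘T⁻¹, ν)`.
Suppose there exists `T*` with `μ∘(T*)⁻¹ = ν` and `M(T*) < ∞`. Then
`λₙ γ²(μ∘Tₙ⁻¹, ν) → 0`; in particular `√λₙ γ(μ∘Tₙ⁻¹, ν) → 0`. -/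
theorem stmt5 {d : ℕ} (μ ν : Measure (EuclideanSpace ℝ (Fin d)))
    [IsProbabilityMeasure μ] [IsProbabilityMeasure ν]
    (c : EuclideanSpace ℝ (Fin d) → EuclideanSpace ℝ (Fin d) → ℝ≥0∞)
    (hc : Measurable (Function.uncurry c))
    (γ : Measure (EuclideanSpace ℝ (Fin d)) → Measure (EuclideanSpace ℝ (Fin d)) → ℝ)
    (hγ : IsProbMetric γ)
    (Mc : (EuclideanSpace ℝ (Fin d) → EuclideanSpace ℝ (Fin d)) → ℝ≥0∞)
    (hMc : ∀ T, Mc T = ∫⁻ x, c x (T x) ∂μ)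
    (Mlam : ℝ → (EuclideanSpace ℝ (Fin d) → EuclideanSpace ℝ (Fin d)) → ℝ≥0∞)
    (hMlam : ∀ lam T, Mlam lam T = Mc T + ENNReal.ofReal (lam * (γ (μ.map T) ν) ^ 2))
    (ε lam : ℕ → ℝ) (hεpos : ∀ n, 0 < ε n) (hlampos : ∀ n, 0 < lam n)
    (hε : Tendsto ε atTop (𝓝 0)) (hlam : Tendsto lam atTop atTop)
    (T : ℕ → EuclideanSpace ℝ (Fin d) → EuclideanSpace ℝ (Fin d))
    (hTmeas : ∀ n, Measurable (T n))
    (hTmin : ∀ n, Mlam (lam n) (T n) - ENNReal.ofReal (ε n) ≤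
      ⨅ S : {S : EuclideanSpace ℝ (Fin d) → EuclideanSpace ℝ (Fin d) // Measurable S},
        Mlam (lam n) S.1)
    (Tstar : EuclideanSpace ℝ (Fin d) → EuclideanSpace ℝ (Fin d))
    (hTstar : Measurable Tstar) (hpush : μ.map Tstar = ν) (hfin : Mc Tstar < ⊤) :
    Tendsto (fun n => lam n * (γ (μ.map (T n)) ν) ^ 2) atTop (𝓝 0) ∧
      Tendsto (fun n => Real.sqrt (lam n) * γ (μ.map (T n)) ν) atTop (𝓝 0) := by
  classical
  set g : ℕ → ℝ := fun n => γ (μ.map (T n)) ν with hg_def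
  have hmapP : ∀ n, IsProbabilityMeasure (μ.map (T n)) := fun n =>
    Measure.isProbabilityMeasure_map (hTmeas n).aemeasurable
  have hgnonneg : ∀ n, 0 ≤ g n := fun n => hγ.1 _ _ (hmapP n) inferInstance
  have hγνν : γ ν ν = 0 := (hγ.2.2.1 ν ν inferInstance inferInstance).mpr rfl
  have hMlamstar : ∀ l : ℝ, Mlam l Tstar = Mc Tstar := by
    intro l
    rw [hMlam, hpush, hγνν]
    simp
  set J : ℝ → ℝ≥0∞ := fun l =>
    ⨅ S : {S : EuclideanSpace ℝ (Fin d) → EuclideanSpace ℝ (Fin d) // Measurable S},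
      Mlam l S.1 with hJ_def
  have hJle : ∀ l, J l ≤ Mc Tstar := fun l => by
    calc J l ≤ Mlam l Tstar := iInf_le _ (⟨Tstar, hTstar⟩ : ({S : EuclideanSpace ℝ (Fin d) → EuclideanSpace ℝ (Fin d) // Measurable S}))
    _ = Mc Tstar := hMlamstar l
  have hJne : ∀ l, J l ≠ ∞ := fun l => ((hJle l).trans_lt hfin).ne
  have hJmono : ∀ {l l' : ℝ}, l ≤ l' → J l ≤ J l' := by
    intro l l' hll
    refine le_iInf fun S => (iInf_le _ S).trans ?_
    rw [hMlam, hMlam]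
    have : ENNReal.ofReal (l * γ (μ.map S.1) ν ^ 2) ≤ ENNReal.ofReal (l' * γ (μ.map S.1) ν ^ 2) :=
      ENNReal.ofReal_le_ofReal (mul_le_mul_of_nonneg_right hll (sq_nonneg _))
    exact add_le_add_right this _
  set L : ℝ≥0∞ := ⨆ k : ℕ, J (k : ℝ) with hL_def
  have hJL : ∀ l : ℝ, J l ≤ L := fun l =>
    (hJmono (Nat.le_ceil l)).trans (le_iSup (fun k : ℕ => J (k : ℝ)) ⌈l⌉₊)
  have hLne : L ≠ ∞ := ((iSup_le fun k => hJle _).trans_lt hfin).ne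
  have hup : ∀ n, Mc (T n) + ENNReal.ofReal (lam n * g n ^ 2) ≤ L + ENNReal.ofReal (ε n) := by
    intro n
    have h := hTmin n
    rw [tsub_le_iff_right] at h
    calc Mc (T n) + ENNReal.ofReal (lam n * g n ^ 2) = Mlam (lam n) (T n) := (hMlam _ _).symm
    _ ≤ J (lam n) + ENNReal.ofReal (ε n) := h
    _ ≤ L + ENNReal.ofReal (ε n) := add_le_add_left (hJL _) _
  have key : Tendsto (fun n => lam n * g n ^ 2) atTop (𝓝 0) := by
    rw [Metric.tendsto_atTop]
    intro δ hδ
    obtain ⟨k, hk⟩ : ∃ k : ℕ, L < J (k : ℝ) + ENNReal.ofReal (δ / 8) := by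
      have hd8 : (0:ℝ) < δ / 8 := by linarith
      by_cases hL0 : L = 0
      · exact ⟨0, by
          rw [hL0]
          exact lt_of_lt_of_le (ENNReal.ofReal_pos.mpr hd8) le_add_self⟩
      · have hsub : L - ENNReal.ofReal (δ / 8) < L :=
          ENNReal.sub_lt_self hLne hL0 (ENNReal.ofReal_pos.mpr hd8).ne'
        rw [hL_def, lt_iSup_iff] at hsub
        obtain ⟨k, hk⟩ := hsub
        refine ⟨k, ?_⟩
        rcases le_or_gt (ENNReal.ofReal (δ / 8)) L with hdl | hdl
        · have heq := tsub_add_cancel_of_le hdl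
          calc L = L - ENNReal.ofReal (δ / 8) + ENNReal.ofReal (δ / 8) := heq.symm
          _ < J (k : ℝ) + ENNReal.ofReal (δ / 8) :=
              ENNReal.add_lt_add_right ENNReal.ofReal_ne_top hk
        · exact hdl.trans_le le_add_self
    have hev1 : ∀ᶠ n in atTop, 2 * (k : ℝ) ≤ lam n := hlam.eventually_ge_atTop _
    have hev2 : ∀ᶠ n in atTop, ε n < δ / 8 :=
      hε.eventually (eventually_mem_set.mpr (Iio_mem_nhds (by linarith : (0:ℝ) < δ / 8)))
    have hev := hev1.and hev2
    rw [eventually_atTop] at hev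
    obtain ⟨N, hN⟩ := hev
    refine ⟨N, fun n hn => ?_⟩
    obtain ⟨hkn, hεn⟩ := hN n hn
    have hknn : (k : ℝ) ≤ lam n - (k : ℝ) := by
      have hk0 : (0:ℝ) ≤ (k : ℝ) := Nat.cast_nonneg k
      linarith
    have hge : (0:ℝ) ≤ lam n - (k : ℝ) := le_trans (Nat.cast_nonneg k) hknn
    have hsplit : ENNReal.ofReal (lam n * g n ^ 2)
        = ENNReal.ofReal ((k : ℝ) * g n ^ 2) + ENNReal.ofReal ((lam n - (k : ℝ)) * g n ^ 2) := by
      rw [← ENNReal.ofReal_add (by positivity) (mul_nonneg hge (sq_nonneg _))]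
      ring_nf
    have h1 : J (k : ℝ) ≤ Mc (T n) + ENNReal.ofReal ((k : ℝ) * g n ^ 2) := by
      calc J (k : ℝ) ≤ Mlam (k : ℝ) (T n) := iInf_le _ (⟨T n, hTmeas n⟩ : ({S : EuclideanSpace ℝ (Fin d) → EuclideanSpace ℝ (Fin d) // Measurable S}))
      _ = _ := hMlam _ _
    have hchain : J (k : ℝ) + ENNReal.ofReal ((lam n - (k : ℝ)) * g n ^ 2)
        < J (k : ℝ) + ENNReal.ofReal (δ / 4) := by
      calc J (k : ℝ) + ENNReal.ofReal ((lam n - (k : ℝ)) * g n ^ 2)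
          ≤ Mc (T n) + ENNReal.ofReal ((k : ℝ) * g n ^ 2)
            + ENNReal.ofReal ((lam n - (k : ℝ)) * g n ^ 2) := add_le_add_left h1 _
      _ = Mc (T n) + ENNReal.ofReal (lam n * g n ^ 2) := by rw [add_assoc, ← hsplit]
      _ ≤ L + ENNReal.ofReal (ε n) := hup n
      _ < (J (k : ℝ) + ENNReal.ofReal (δ / 8)) + ENNReal.ofReal (δ / 8) :=
          ENNReal.add_lt_add_of_lt_of_le ENNReal.ofReal_ne_top hk
            ((ENNReal.ofReal_lt_ofReal_iff (by linarith)).mpr hεn).le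
      _ = J (k : ℝ) + ENNReal.ofReal (δ / 4) := by
          rw [add_assoc, ← ENNReal.ofReal_add (by linarith) (by linarith)]
          congr 2
          ring
    have hlt : ENNReal.ofReal ((lam n - (k : ℝ)) * g n ^ 2) < ENNReal.ofReal (δ / 4) :=
      (ENNReal.add_lt_add_iff_left (hJne _)).mp hchain
    have hlt' : (lam n - (k : ℝ)) * g n ^ 2 < δ / 4 :=
      (ENNReal.ofReal_lt_ofReal_iff (by linarith)).mp hlt
    have hfinal : lam n * g n ^ 2 < δ := by
      nlinarith [sq_nonneg (g n), Nat.cast_nonneg (α := ℝ) k]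
    rw [Real.dist_eq, sub_zero, abs_of_nonneg (mul_nonneg (hlampos n).le (sq_nonneg _))]
    exact hfinal
  refine ⟨key, ?_⟩
  have hsqrt : Tendsto (fun n => Real.sqrt (lam n * g n ^ 2)) atTop (𝓝 0) := by
    have h := (Real.continuous_sqrt.tendsto 0).comp key
    simpa [Function.comp_def] using h
  refine hsqrt.congr fun n => ?_
  rw [Real.sqrt_mul (hlampos n).le, Real.sqrt_sq (hgnonneg n)]
end
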